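/- Let H be the group with presentation ⟨aₙ (n ∈ ℤ) | a_{n+1}(aₙ a_{n+2}) a_{n+1}⁻¹ = (aₙ a_{n+2})² for all n ∈ ℤ⟩. There is an automorphism σ of H with σ(aₙ) = a_{n+1} for all n ∈ ℤ, and the one-relator group Γ = ⟨t, a | (t a t⁻¹)(a t² a t⁻²)(t a t⁻¹)⁻¹ = (a t² a t⁻²)²⟩ is isomorphic to the semidirect product H ⋊ ℤ in which the generator of ℤ acts by σ, via an isomorphism sending a to a₀ and t to the generator of the ℤ-factor. -/

import Mathlib

namespace GammaSemidirect

/-- The relators `a_{n+1} (aₙ a_{n+2}) a_{n+1}⁻¹ ((aₙ a_{n+2})²)⁻¹`, `n ∈ ℤ`, on the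
generators `aₙ`, `n ∈ ℤ`. -/
def Hrels : Set (FreeGroup ℤ) :=
  {r | ∃ n : ℤ, r = FreeGroup.of (n + 1) * (FreeGroup.of n * FreeGroup.of (n + 2)) *
    (FreeGroup.of (n + 1))⁻¹ * ((FreeGroup.of n * FreeGroup.of (n + 2)) ^ 2)⁻¹}

/-- `H = ⟨aₙ (n ∈ ℤ) | a_{n+1}(aₙ a_{n+2})a_{n+1}⁻¹ = (aₙ a_{n+2})² for all n ∈ ℤ⟩`. -/
abbrev H : Type := PresentedGroup Hrels

/-- `t` as an element of the free group on two generators `{t, a}`. -/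
def t : FreeGroup Bool := FreeGroup.of true

/-- `a` as an element of the free group on two generators `{t, a}`. -/
def a : FreeGroup Bool := FreeGroup.of false

/-- The relator `(t a t⁻¹)(a t² a t⁻²)(t a t⁻¹)⁻¹ ((a t² a t⁻²)²)⁻¹`. -/
def relator : FreeGroup Bool :=
  (t * a * t⁻¹) * (a * t ^ 2 * a * (t ^ 2)⁻¹) * (t * a * t⁻¹)⁻¹ *
    ((a * t ^ 2 * a * (t ^ 2)⁻¹) ^ 2)⁻¹

/-- The one-relator group `Γ = ⟨t, a | (t a t⁻¹)(a t² a t⁻²)(t a t⁻¹)⁻¹ = (a t² a t⁻²)²⟩`. -/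
abbrev Γ : Type := PresentedGroup ({relator} : Set (FreeGroup Bool))


lemma rel_one (m : ℤ) :
    (PresentedGroup.of (m+1) * (PresentedGroup.of m * PresentedGroup.of (m+2)) *
      (PresentedGroup.of (m+1))⁻¹ *
      ((PresentedGroup.of m * PresentedGroup.of (m+2)) ^ 2)⁻¹ : H) = 1 := by
  have h : FreeGroup.of (m+1) * (FreeGroup.of m * FreeGroup.of (m+2)) *
      (FreeGroup.of (m+1))⁻¹ * ((FreeGroup.of m * FreeGroup.of (m+2)) ^ 2)⁻¹ ∈ Hrels := ⟨m, rfl⟩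
  have h2 : PresentedGroup.mk Hrels (FreeGroup.of (m+1) * (FreeGroup.of m * FreeGroup.of (m+2)) *
      (FreeGroup.of (m+1))⁻¹ * ((FreeGroup.of m * FreeGroup.of (m+2)) ^ 2)⁻¹) = 1 :=
    (QuotientGroup.eq_one_iff _).mpr (Subgroup.subset_normalClosure h)
  simpa [PresentedGroup.of, map_mul, map_inv, map_pow] using h2

def shift (k : ℤ) : H →* H :=
  PresentedGroup.toGroup (f := fun n => (PresentedGroup.of (n + k) : H)) (by
    rintro r ⟨n, rfl⟩
    simp only [map_mul, map_inv, map_pow, FreeGroup.lift_apply_of]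
    have := rel_one (n + k)
    convert this using 5 <;> (try ring_nf) <;> rfl)

@[simp] lemma shift_of (k n : ℤ) : shift k (PresentedGroup.of n) = PresentedGroup.of (n + k) :=
  PresentedGroup.toGroup.of (f := fun n => (PresentedGroup.of (n + k) : H)) _



lemma shift_comp (k l : ℤ) : (shift k).comp (shift l) = shift (l + k) := by
  ext n; simp [add_assoc]

lemma shift_zero : shift 0 = MonoidHom.id H := by
  ext n; simp

lemma shift_shift (k l : ℤ) (x : H) : shift k (shift l x) = shift (l + k) x :=
  DFunLike.congr_fun (shift_comp k l) x

def σ : MulAut H where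
  toFun := shift 1
  invFun := shift (-1)
  left_inv x := by
    have h := shift_shift (-1) 1 x
    rw [add_neg_cancel, shift_zero] at h
    simpa using h
  right_inv x := by
    have h := shift_shift 1 (-1) x
    rw [neg_add_cancel, shift_zero] at h
    simpa using h
  map_mul' := map_mul _

@[simp] lemma σ_of (n : ℤ) : σ (PresentedGroup.of n) = PresentedGroup.of (n + 1) :=
  shift_of 1 n

@[simp] lemma σ_inv_of (n : ℤ) : σ⁻¹ (PresentedGroup.of n) = PresentedGroup.of (n - 1) := by
  have h : σ⁻¹ (PresentedGroup.of n) = shift (-1) (PresentedGroup.of n) := rfl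
  rw [h, shift_of, ← sub_eq_add_neg]

lemma σ_zpow_of (z n : ℤ) : (σ ^ z) (PresentedGroup.of n) = PresentedGroup.of (n + z) := by
  induction z using Int.induction_on generalizing n with
  | zero => simp
  | succ k ih =>
    have : (σ ^ ((k : ℤ) + 1)) = σ ^ (k : ℤ) * σ := by rw [zpow_add, zpow_one]
    rw [this]
    show (σ ^ (k:ℤ)) (σ (PresentedGroup.of n)) = _
    rw [σ_of, ih (n+1)]; ring_nf
  | pred k ih =>
    have : (σ ^ (-(k : ℤ) - 1)) = σ ^ (-(k : ℤ)) * σ⁻¹ := by rw [sub_eq_add_neg, zpow_add, zpow_neg_one]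
    rw [this]
    show (σ ^ (-(k:ℤ))) (σ⁻¹ (PresentedGroup.of n)) = _
    rw [σ_inv_of, ih (n-1)]; ring_nf



abbrev P : Type := H ⋊[zpowersHom (MulAut H) σ] Multiplicative ℤ

def u : Multiplicative ℤ := Multiplicative.ofAdd 1
def τ : Γ := PresentedGroup.of true
def α : Γ := PresentedGroup.of false

lemma relτα : τ * α * τ⁻¹ * (α * τ ^ 2 * α * (τ ^ 2)⁻¹) * (τ * α * τ⁻¹)⁻¹ *
    ((α * τ ^ 2 * α * (τ ^ 2)⁻¹) ^ 2)⁻¹ = 1 := by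
  have h : PresentedGroup.mk ({relator} : Set (FreeGroup Bool)) relator = 1 :=
    (QuotientGroup.eq_one_iff _).mpr (Subgroup.subset_normalClosure rfl)
  simp only [relator, t, a, map_mul, map_inv, map_pow] at h
  exact h

lemma conj_helper {G : Type*} [Group G] (T A B C : G) (h1 : T * A * T⁻¹ = B)
    (h2 : T ^ 2 * A * (T ^ 2)⁻¹ = C) :
    T * A * T⁻¹ * (A * T ^ 2 * A * (T ^ 2)⁻¹) * (T * A * T⁻¹)⁻¹ *
      ((A * T ^ 2 * A * (T ^ 2)⁻¹) ^ 2)⁻¹ =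
    B * (A * C) * B⁻¹ * ((A * C) ^ 2)⁻¹ := by
  have h3 : A * T ^ 2 * A * (T ^ 2)⁻¹ = A * (T ^ 2 * A * (T ^ 2)⁻¹) := by group
  rw [h3, h2, h1]

def fΓ : Γ →* P :=
  PresentedGroup.toGroup
    (f := fun b => if b then (SemidirectProduct.inr u : P)
      else SemidirectProduct.inl (PresentedGroup.of (0 : ℤ))) (by
    rintro r rfl
    simp only [relator, t, a, map_mul, map_inv, map_pow, FreeGroup.lift_apply_of, Bool.false_eq_true, if_true, if_false, reduceIte]
    have e1 : (zpowersHom (MulAut H) σ) u (PresentedGroup.of (0:ℤ)) = PresentedGroup.of (1:ℤ) := by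
      show (σ ^ ((1:ℤ))) (PresentedGroup.of (0:ℤ)) = _
      rw [σ_zpow_of]; norm_num
    have h1 : (SemidirectProduct.inr u : P) * SemidirectProduct.inl (PresentedGroup.of (0:ℤ)) *
        (SemidirectProduct.inr u)⁻¹ = SemidirectProduct.inl (PresentedGroup.of (1:ℤ)) := by
      have h := SemidirectProduct.inl_aut (φ := zpowersHom (MulAut H) σ) u
        (PresentedGroup.of (0:ℤ))
      rw [map_inv, e1] at h
      exact h.symm
    have e2 : (zpowersHom (MulAut H) σ) (u ^ 2) (PresentedGroup.of (0:ℤ)) =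
        PresentedGroup.of (2:ℤ) := by
      show (σ ^ (Multiplicative.toAdd (u ^ 2))) (PresentedGroup.of (0:ℤ)) = _
      have h : Multiplicative.toAdd (u ^ 2) = 2 := rfl
      rw [h, σ_zpow_of]; norm_num
    have h2 : (SemidirectProduct.inr u : P) ^ 2 *
        SemidirectProduct.inl (PresentedGroup.of (0:ℤ)) *
        ((SemidirectProduct.inr u : P) ^ 2)⁻¹ = SemidirectProduct.inl (PresentedGroup.of (2:ℤ)) := by
      have h := SemidirectProduct.inl_aut (φ := zpowersHom (MulAut H) σ) (u ^ 2)
        (PresentedGroup.of (0:ℤ))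
      rw [map_inv, e2, map_pow] at h
      exact h.symm
    rw [conj_helper _ _ _ _ h1 h2, ← map_mul, ← map_mul, ← map_inv, ← map_pow, ← map_inv,
      ← map_mul, ← map_mul]
    have := rel_one 0
    norm_num at this
    rw [this, map_one])

@[simp] lemma fΓ_a : fΓ α = SemidirectProduct.inl (PresentedGroup.of (0 : ℤ)) :=
  PresentedGroup.toGroup.of _
@[simp] lemma fΓ_t : fΓ τ = SemidirectProduct.inr u :=
  PresentedGroup.toGroup.of _

def φH : H →* Γ :=
  PresentedGroup.toGroup (f := fun n => τ ^ n * α * (τ ^ n)⁻¹) (by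
    rintro r ⟨n, rfl⟩
    simp only [map_mul, map_inv, map_pow, FreeGroup.lift_apply_of]
    have key : τ ^ (n+1) * α * (τ ^ (n+1))⁻¹ * (τ ^ n * α * (τ ^ n)⁻¹ *
        (τ ^ (n+2) * α * (τ ^ (n+2))⁻¹)) * (τ ^ (n+1) * α * (τ ^ (n+1))⁻¹)⁻¹ *
        ((τ ^ n * α * (τ ^ n)⁻¹ * (τ ^ (n+2) * α * (τ ^ (n+2))⁻¹)) ^ 2)⁻¹ =
        τ ^ n * (τ * α * τ⁻¹ * (α * τ ^ 2 * α * (τ ^ 2)⁻¹) * (τ * α * τ⁻¹)⁻¹ *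
          ((α * τ ^ 2 * α * (τ ^ 2)⁻¹) ^ 2)⁻¹) * (τ ^ n)⁻¹ := by
      have sq : ∀ y : Γ, ((y : Γ) ^ 2)⁻¹ = y⁻¹ * y⁻¹ := fun y => by group
      simp only [sq, mul_inv_rev, pow_two]
      group
      simp only [zpow_two, pow_two, mul_assoc]
    rw [key, relτα, mul_one, mul_inv_cancel])

@[simp] lemma φH_of (n : ℤ) : φH (PresentedGroup.of n) = τ ^ n * α * (τ ^ n)⁻¹ :=
  PresentedGroup.toGroup.of _

def gΓ : P →* Γ :=
  SemidirectProduct.lift φH (zpowersHom Γ τ) (by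
    intro g
    ext n
    simp only [MonoidHom.comp_apply, MulEquiv.coe_toMonoidHom, MulAut.conj_apply,
      zpowersHom_apply]
    show φH ((σ ^ (Multiplicative.toAdd g)) (PresentedGroup.of n)) = _
    rw [σ_zpow_of, φH_of, φH_of, zpow_add]
    group)



@[simp] lemma gΓ_inl (h : H) : gΓ (SemidirectProduct.inl h) = φH h := by
  simp [gΓ]

@[simp] lemma gΓ_inr (g : Multiplicative ℤ) :
    gΓ (SemidirectProduct.inr g) = τ ^ (Multiplicative.toAdd g) := by
  simp [gΓ]

lemma gf : gΓ.comp fΓ = MonoidHom.id Γ := by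
  apply PresentedGroup.ext
  intro b
  cases b
  · show gΓ (fΓ α) = α
    rw [fΓ_a, gΓ_inl, φH_of]
    simp
  · show gΓ (fΓ τ) = τ
    rw [fΓ_t, gΓ_inr]
    simp [u]

lemma fg : fΓ.comp gΓ = MonoidHom.id P := by
  apply SemidirectProduct.hom_ext
  · apply PresentedGroup.ext
    intro n
    show fΓ (gΓ (SemidirectProduct.inl (PresentedGroup.of n))) = SemidirectProduct.inl _
    rw [gΓ_inl, φH_of, map_mul, map_mul, map_inv, map_zpow, fΓ_a, fΓ_t]
    rw [← map_zpow]
    have h := SemidirectProduct.inl_aut (φ := zpowersHom (MulAut H) σ) (u ^ n)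
      (PresentedGroup.of (0:ℤ))
    rw [map_inv] at h
    rw [← h]
    congr 1
    show (σ ^ (Multiplicative.toAdd (u ^ n))) (PresentedGroup.of (0:ℤ)) = _
    have h2 : Multiplicative.toAdd (u ^ n) = n := by
      simp [u]
    rw [h2, σ_zpow_of, zero_add]
  · apply MonoidHom.ext_mint
    show fΓ (gΓ (SemidirectProduct.inr (Multiplicative.ofAdd 1))) = SemidirectProduct.inr _
    rw [gΓ_inr]
    simp [fΓ_t, u]


end GammaSemidirect

open GammaSemidirect in
/-- There is an automorphism `σ` of `H` shifting the generators, `σ(aₙ) = a_{n+1}`, and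
`Γ` is isomorphic to the semidirect product `H ⋊ ℤ` in which the generator of `ℤ` acts by
`σ`, via an isomorphism sending `a` to `a₀` and `t` to the generator of the `ℤ`-factor. -/
theorem gamma_iso_semidirect :
    ∃ σ : MulAut H, (∀ n : ℤ, σ (PresentedGroup.of n) = PresentedGroup.of (n + 1)) ∧
      ∃ e : Γ ≃* H ⋊[zpowersHom (MulAut H) σ] Multiplicative ℤ,
        e (PresentedGroup.of false) = SemidirectProduct.inl (PresentedGroup.of (0 : ℤ)) ∧
        e (PresentedGroup.of true) = SemidirectProduct.inr (Multiplicative.ofAdd 1) := by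
  refine ⟨σ, fun n => σ_of n, MonoidHom.toMulEquiv fΓ gΓ gf fg, ?_, ?_⟩
  · show fΓ α = _
    exact fΓ_a
  · show fΓ τ = _
    exact fΓ_t
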